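/- Let S : [0,∞) → ℝ be non-decreasing with S ≥ 0, and suppose the function g(u) = S(e^{|u|})/e^{|u|} is unbounded on ℝ. Then for every L > 0 and every Δu > 0 there exist, for each k ∈ ℕ, a point u_k → ∞ with g(u) ≥ k·e^{−Δu} for all u ∈ [u_k, u_k + Δu]; consequently, for every L > 0, sup_{n ∈ ℤ} (1/2π) ∫_ℝ g(u) · L · ( sin(uL/2) / (uL/2 − πn) )² du = ∞ (the integrals taken in the extended real sense). -/

import Mathlib

open MeasureTheory Set Filter

set_option maxHeartbeats 1000000 in
/-- Let `S : [0,∞) → ℝ` be non-decreasing and nonnegative, and suppose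
`g(u) = S(e^{|u|})/e^{|u|}` is unbounded on `ℝ`.  Then for every `L > 0` and every
`Δu > 0` there exist points `u_k → ∞` with `g ≥ k·e^{−Δu}` on `[u_k, u_k + Δu]`;
consequently, for every `L > 0`,
`sup_{n ∈ ℤ} (1/2π) ∫_ℝ g(u)·L·(sin(uL/2)/(uL/2 − πn))² du = ∞`
(the integrals taken in the extended real sense). -/
theorem fejer_coefficients_unbounded_of_unbounded
    (S : ℝ → ℝ) (hmono : MonotoneOn S (Ici (0 : ℝ))) (hpos : ∀ x : ℝ, 0 ≤ x → 0 ≤ S x)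
    (g : ℝ → ℝ) (hg : ∀ u : ℝ, g u = S (Real.exp |u|) / Real.exp |u|)
    (hunbdd : ¬ ∃ C : ℝ, ∀ u : ℝ, |g u| ≤ C) :
    (∀ L : ℝ, 0 < L → ∀ Δu : ℝ, 0 < Δu →
      ∃ u : ℕ → ℝ, Tendsto u atTop atTop ∧
        ∀ k : ℕ, ∀ x ∈ Icc (u k) (u k + Δu), (k : ℝ) * Real.exp (-Δu) ≤ g x) ∧
    (∀ L : ℝ, 0 < L →
      (⨆ n : ℤ, ∫⁻ u : ℝ, ENNReal.ofReal ((1 / (2 * Real.pi)) *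
        (g u * L * (Real.sin (u * L / 2) / (u * L / 2 - Real.pi * n)) ^ 2))) = ⊤) := by
  have hπ := Real.pi_pos
  have hgnn : ∀ u, 0 ≤ g u := fun u => by
    rw [hg]; exact div_nonneg (hpos _ (Real.exp_nonneg _)) (Real.exp_nonneg _)
  have hprop : ∀ a b : ℝ, 0 ≤ a → a ≤ b → g a * Real.exp (a - b) ≤ g b := by
    intro a b ha hab
    have hS : S (Real.exp a) ≤ S (Real.exp b) :=
      hmono (Real.exp_nonneg a) (Real.exp_nonneg b) (Real.exp_le_exp.2 hab)
    have h1 : g a * Real.exp (a - b) = S (Real.exp a) / Real.exp b := by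
      rw [hg, abs_of_nonneg ha, Real.exp_sub]
      have := (Real.exp_pos a).ne'
      field_simp
    rw [h1, hg, abs_of_nonneg (ha.trans hab)]
    exact (div_le_div_iff_of_pos_right (Real.exp_pos b)).2 hS
  have hbig : ∀ c : ℝ, 0 ≤ c → ∃ u, c ≤ u ∧ c ≤ g u := by
    intro c hc
    by_contra h
    push_neg at h
    apply hunbdd
    refine ⟨max c (S (Real.exp c)), fun u => ?_⟩
    rw [abs_of_nonneg (hgnn u)]
    rcases le_or_gt c |u| with hcu | hcu
    · have h1 : g |u| < c := h |u| hcu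
      have hgu : g u = g |u| := by rw [hg, hg, abs_abs]
      exact le_max_of_le_left (by linarith)
    · have h1 : g u ≤ S (Real.exp |u|) := by
        rw [hg]
        exact div_le_self (hpos _ (Real.exp_nonneg _)) (Real.one_le_exp (abs_nonneg u))
      have h2 : S (Real.exp |u|) ≤ S (Real.exp c) :=
        hmono (Real.exp_nonneg _) (Real.exp_nonneg _) (Real.exp_le_exp.2 hcu.le)
      exact le_max_of_le_right (h1.trans h2)
  have part1 : ∀ Δu : ℝ, 0 < Δu →
      ∃ u : ℕ → ℝ, Tendsto u atTop atTop ∧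
        ∀ k : ℕ, ∀ x ∈ Icc (u k) (u k + Δu), (k : ℝ) * Real.exp (-Δu) ≤ g x := by
    intro Δu hΔu
    choose u hu hgu using fun k : ℕ => hbig k (Nat.cast_nonneg k)
    refine ⟨u, tendsto_atTop_mono hu tendsto_natCast_atTop_atTop, fun k x hx => ?_⟩
    have h0 : 0 ≤ u k := (Nat.cast_nonneg k).trans (hu k)
    have h1 := hprop (u k) x h0 hx.1
    have h2 : (k : ℝ) * Real.exp (-Δu) ≤ g (u k) * Real.exp (u k - x) :=
      mul_le_mul (hgu k) (Real.exp_le_exp.2 (by linarith [hx.2])) (Real.exp_pos _).le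
        ((Nat.cast_nonneg k).trans (hgu k))
    linarith
  refine ⟨fun L _ => part1, fun L hL => ?_⟩
  set Δu : ℝ := 4 * Real.pi / L with hΔudef
  have hΔu : 0 < Δu := by positivity
  have hΔuL : Δu * L = 4 * Real.pi := by
    rw [hΔudef]; field_simp
  obtain ⟨u, -, hbound⟩ := part1 Δu hΔu
  apply ENNReal.eq_top_of_forall_nnreal_le
  intro r
  obtain ⟨k, hk⟩ := exists_nat_ge ((r : ℝ) * (4 * Real.pi ^ 2) * Real.exp Δu)
  set a : ℝ := u k * L / 2 with ha
  set n : ℤ := ⌈(a - Real.pi / 4) / Real.pi⌉ with hn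
  have hn1 : a - Real.pi / 4 ≤ Real.pi * n := by
    have h := Int.le_ceil ((a - Real.pi / 4) / Real.pi)
    rw [div_le_iff₀ hπ] at h
    linarith
  have hn2 : Real.pi * n ≤ a + 3 * Real.pi / 4 := by
    have h := Int.ceil_lt_add_one ((a - Real.pi / 4) / Real.pi)
    have h2 : ((a - Real.pi / 4) / Real.pi) * Real.pi = a - Real.pi / 4 :=
      div_mul_cancel₀ _ hπ.ne'
    nlinarith [mul_lt_mul_of_pos_right h hπ]
  set lo : ℝ := Real.pi * n + Real.pi / 4 with hlo
  set hi : ℝ := Real.pi * n + 3 * Real.pi / 4 with hhi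
  set c : ℝ := (1 / (2 * Real.pi)) *
    ((k : ℝ) * Real.exp (-Δu) * L * ((1 / 2) / Real.pi ^ 2)) with hc
  clear_value a n lo hi c
  have hcnn : 0 ≤ c := by
    rw [hc]; positivity
  -- pointwise lower bound on the interval
  have key : ∀ x ∈ Set.Icc (2 * lo / L) (2 * hi / L),
      c ≤ (1 / (2 * Real.pi)) *
        (g x * L * (Real.sin (x * L / 2) / (x * L / 2 - Real.pi * n)) ^ 2) := by
    intro x hx
    have e1 : 2 * lo / L * L = 2 * lo := div_mul_cancel₀ _ hL.ne'
    have e2 : 2 * hi / L * L = 2 * hi := div_mul_cancel₀ _ hL.ne'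
    have hx1 : lo ≤ x * L / 2 := by
      have h := mul_le_mul_of_nonneg_right hx.1 hL.le
      rw [e1] at h; linarith
    have hx2 : x * L / 2 ≤ hi := by
      have h := mul_le_mul_of_nonneg_right hx.2 hL.le
      rw [e2] at h; linarith
    have hxIcc : x ∈ Set.Icc (u k) (u k + Δu) := by
      constructor
      · have h1 : u k * L ≤ x * L := by
          rw [ha] at hn1; simp only [hlo] at hx1; linarith
        exact le_of_mul_le_mul_right h1 hL
      · have h1 : x * L ≤ (u k + Δu) * L := by
          rw [ha] at hn2
          simp only [hhi] at hx2
          have h2 : x * L ≤ u k * L + 3 * Real.pi := by linarith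
          have h3 : (u k + Δu) * L = u k * L + 4 * Real.pi := by
            rw [add_mul, hΔuL]
          linarith
        exact le_of_mul_le_mul_right h1 hL
    have hgx : (k : ℝ) * Real.exp (-Δu) ≤ g x := hbound k x hxIcc
    set t : ℝ := x * L / 2 - Real.pi * n with htdef
    clear_value t
    have ht1 : Real.pi / 4 ≤ t := by simp only [htdef]; rw [hlo] at hx1; linarith
    have ht2 : t ≤ 3 * Real.pi / 4 := by simp only [htdef]; rw [hhi] at hx2; linarith
    have hsin : Real.sqrt 2 / 2 ≤ Real.sin t := by
      have habs : |Real.pi / 2 - t| ≤ Real.pi / 4 := abs_le.2 ⟨by linarith, by linarith⟩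
      have hcc : Real.cos (Real.pi / 4) ≤ Real.cos |Real.pi / 2 - t| :=
        Real.cos_le_cos_of_nonneg_of_le_pi (abs_nonneg _) (by linarith) habs
      rw [Real.cos_abs, Real.cos_pi_div_two_sub, Real.cos_pi_div_four] at hcc
      exact hcc
    have hsinsq : (1 : ℝ) / 2 ≤ Real.sin t ^ 2 := by
      have h1 : (Real.sqrt 2 / 2) ^ 2 ≤ Real.sin t ^ 2 :=
        pow_le_pow_left₀ (by positivity) hsin 2
      have h2 : (Real.sqrt 2 / 2) ^ 2 = 1 / 2 := by
        rw [div_pow, Real.sq_sqrt (by norm_num : (2:ℝ) ≥ 0)]; norm_num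
      linarith
    have hsinx : Real.sin (x * L / 2) ^ 2 = Real.sin t ^ 2 := by
      have hx' : x * L / 2 = t + (n : ℝ) * Real.pi := by rw [htdef]; ring
      rw [hx', Real.sin_add_int_mul_pi, mul_pow]
      rcases Int.even_or_odd n with he | ho
      · rw [he.neg_one_zpow]; ring
      · rw [ho.neg_one_zpow]; ring
    have hq : (1 / 2) / Real.pi ^ 2 ≤ (Real.sin (x * L / 2) / t) ^ 2 := by
      rw [div_pow, hsinx]
      have htsq : t ^ 2 ≤ Real.pi ^ 2 := by nlinarith
      have htpos : 0 < t ^ 2 := by nlinarith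
      exact div_le_div₀ (sq_nonneg _) hsinsq htpos htsq
    have hmain : (k : ℝ) * Real.exp (-Δu) * L * ((1 / 2) / Real.pi ^ 2) ≤
        g x * L * (Real.sin (x * L / 2) / t) ^ 2 :=
      mul_le_mul (mul_le_mul_of_nonneg_right hgx hL.le) hq (by positivity)
        (mul_nonneg (hgnn x) hL.le)
    rw [hc]
    exact mul_le_mul_of_nonneg_left hmain (by positivity)
  -- integral lower bound
  have hlo_le_hi : 2 * lo / L ≤ 2 * hi / L := by
    apply (div_le_div_iff_of_pos_right hL).2
    rw [hlo, hhi]; linarith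
  have hint : ENNReal.ofReal ((k : ℝ) * Real.exp (-Δu) / (4 * Real.pi ^ 2)) ≤
      ∫⁻ x : ℝ, ENNReal.ofReal ((1 / (2 * Real.pi)) *
        (g x * L * (Real.sin (x * L / 2) / (x * L / 2 - Real.pi * n)) ^ 2)) := by
    have hind : ∀ x : ℝ,
        (Set.Icc (2 * lo / L) (2 * hi / L)).indicator (fun _ => ENNReal.ofReal c) x ≤
        ENNReal.ofReal ((1 / (2 * Real.pi)) *
          (g x * L * (Real.sin (x * L / 2) / (x * L / 2 - Real.pi * n)) ^ 2)) := by
      intro x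
      by_cases hx : x ∈ Set.Icc (2 * lo / L) (2 * hi / L)
      · rw [Set.indicator_of_mem hx]
        exact ENNReal.ofReal_le_ofReal (key x hx)
      · rw [Set.indicator_of_notMem hx]
        exact zero_le
    calc ENNReal.ofReal ((k : ℝ) * Real.exp (-Δu) / (4 * Real.pi ^ 2))
        = ENNReal.ofReal c * volume (Set.Icc (2 * lo / L) (2 * hi / L)) := by
          rw [Real.volume_Icc, ← ENNReal.ofReal_mul hcnn]
          congr 1
          have : 2 * hi / L - 2 * lo / L = Real.pi / L := by
            rw [hlo, hhi]; field_simp; ring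
          rw [this, hc]
          field_simp
          ring
      _ = ∫⁻ x, (Set.Icc (2 * lo / L) (2 * hi / L)).indicator
            (fun _ => ENNReal.ofReal c) x :=
          (lintegral_indicator_const measurableSet_Icc _).symm
      _ ≤ _ := lintegral_mono hind
  refine le_trans ?_ (le_trans hint (le_iSup (fun m : ℤ =>
    ∫⁻ x : ℝ, ENNReal.ofReal ((1 / (2 * Real.pi)) *
      (g x * L * (Real.sin (x * L / 2) / (x * L / 2 - Real.pi * m)) ^ 2))) n))
  rw [← ENNReal.ofReal_coe_nnreal]
  apply ENNReal.ofReal_le_ofReal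
  rw [le_div_iff₀ (by positivity : (0:ℝ) < 4 * Real.pi ^ 2)]
  have hee : Real.exp Δu * Real.exp (-Δu) = 1 := by
    rw [← Real.exp_add]; simp
  have h1 : (r : ℝ) * (4 * Real.pi ^ 2) * Real.exp Δu * Real.exp (-Δu) ≤
      (k : ℝ) * Real.exp (-Δu) :=
    mul_le_mul_of_nonneg_right hk (Real.exp_nonneg _)
  have h2 : (r : ℝ) * (4 * Real.pi ^ 2) =
      (r : ℝ) * (4 * Real.pi ^ 2) * Real.exp Δu * Real.exp (-Δu) := by
    rw [mul_assoc ((r : ℝ) * (4 * Real.pi ^ 2)), hee, mul_one]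
  linarith
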